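/- For θ ∈ (0,1), the parametrized curve ξ₁(t) = −(ω²θ²/2)·[((1−θ)(1−e^{−t/θ}) + t)/(θ + (1−θ)e^{−t/θ})]² and η(t) = ω²(1−θ)·(θ − (θ+t)e^{−t/θ})/(θ + (1−θ)e^{−t/θ}) satisfies: η(0) = 0, ξ₁(0) = 0, and the limit of η(t)/ξ₁(t) as t → 0⁺ equals (θ−1)/θ. -/

import Mathlib

open Real Filter Set

private lemma limB : Filter.Tendsto (fun x : ℝ => (Real.exp x - 1) / x)
    (nhdsWithin 0 (Set.Ioi 0)) (nhds 1) := by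
  have h := Real.hasDerivAt_exp 0
  rw [hasDerivAt_iff_tendsto_slope] at h
  rw [Real.exp_zero] at h
  have h2 : Filter.Tendsto (fun x : ℝ => (Real.exp x - 1) / x)
      (nhdsWithin 0 {(0:ℝ)}ᶜ) (nhds 1) := by
    refine h.congr fun x => ?_
    rw [slope_def_field]
    simp [Real.exp_zero]
  exact h2.mono_left (nhdsWithin_mono _ (fun x hx => ne_of_gt hx))

private lemma limA : Filter.Tendsto (fun x : ℝ => (Real.exp x - 1 - x) / x ^ 2)
    (nhdsWithin 0 (Set.Ioi 0)) (nhds (1/2 : ℝ)) := by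
  apply HasDerivAt.lhopital_zero_nhdsGT
    (f' := fun x => Real.exp x - 1) (g' := fun x => 2 * x)
  · filter_upwards with x
    exact ((Real.hasDerivAt_exp x).sub_const 1).sub (hasDerivAt_id x)
  · filter_upwards with x
    simpa using hasDerivAt_pow 2 x
  · filter_upwards [self_mem_nhdsWithin] with x hx
    have : (0:ℝ) < x := hx
    positivity
  · have : Filter.Tendsto (fun x : ℝ => Real.exp x - 1 - x) (nhdsWithin 0 (Set.Ioi 0))
        (nhds (Real.exp 0 - 1 - 0)) :=
      (((Real.continuous_exp.sub continuous_const).sub continuous_id).continuousAt).continuousWithinAt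
    simpa using this
  · have : Filter.Tendsto (fun x : ℝ => x ^ 2) (nhdsWithin 0 (Set.Ioi 0)) (nhds ((0:ℝ) ^ 2)) :=
      ((continuous_pow 2).continuousAt).continuousWithinAt
    simpa using this
  · have h : Filter.Tendsto (fun x : ℝ => (1/2 : ℝ) * ((Real.exp x - 1) / x))
        (nhdsWithin 0 (Set.Ioi 0)) (nhds ((1/2) * 1)) := limB.const_mul _
    refine (h.congr' ?_).mono_right (by norm_num)
    filter_upwards [self_mem_nhdsWithin] with x hx
    have hx' : x ≠ 0 := ne_of_gt (show (0:ℝ) < x from hx)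
    field_simp

set_option maxHeartbeats 1000000 in
private lemma key (θ ω x u : ℝ) (hθ0 : θ ≠ 0) (hu : u ≠ 0) (hx : x ≠ 0)
    (hD : θ + (1-θ)*u ≠ 0) (hN : (1-θ)*(1-u)+θ*x ≠ 0) (hω : ω ≠ 0) :
    (-2*(1-θ)*(θ+(1-θ)*u)*((u⁻¹-1-x)/x^2)) / (θ*u*((1-θ)*((u⁻¹-1)/x) + θ*u⁻¹)^2)
    = (ω^2*(1-θ)*(θ-(θ+θ*x)*u)/(θ+(1-θ)*u)) /
      (-(ω^2*θ^2/2)*(((1-θ)*(1-u)+θ*x)/(θ+(1-θ)*u))^2) := by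
  have h1 : (1-θ)*((u⁻¹-1)/x) + θ*u⁻¹ = ((1-θ)*(1-u)+θ*x)/(u*x) := by
    field_simp
  rw [h1]
  rw [div_eq_div_iff]
  · field_simp
    ring
  · exact mul_ne_zero (mul_ne_zero hθ0 hu)
      (pow_ne_zero _ (div_ne_zero hN (mul_ne_zero hu hx)))
  · apply mul_ne_zero
    · simp only [neg_ne_zero]; positivity
    · exact pow_ne_zero _ (div_ne_zero hN hD)

/-- The parametrized discontinuity-mapping curve (ξ₁(t), η(t))
satisfies ξ₁(0) = 0, η(0) = 0, and η(t)/ξ₁(t) → (θ−1)/θ as t → 0⁺. -/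
theorem pdm_one_sided_slope (θ ω : ℝ) (hθ : θ ∈ Set.Ioo (0 : ℝ) 1) (hω : 0 < ω) :
    let ξ₁ : ℝ → ℝ := fun t =>
      -(ω ^ 2 * θ ^ 2 / 2) *
        (((1 - θ) * (1 - Real.exp (-t / θ)) + t) /
          (θ + (1 - θ) * Real.exp (-t / θ))) ^ 2
    let η : ℝ → ℝ := fun t =>
      ω ^ 2 * (1 - θ) * (θ - (θ + t) * Real.exp (-t / θ)) /
        (θ + (1 - θ) * Real.exp (-t / θ))
    η 0 = 0 ∧ ξ₁ 0 = 0 ∧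
    Filter.Tendsto (fun t => η t / ξ₁ t) (nhdsWithin 0 (Set.Ioi 0))
      (nhds ((θ - 1) / θ)) := by
  obtain ⟨hθ0, hθ1⟩ := hθ
  intro ξ₁ η
  refine ⟨by simp [η], by simp [ξ₁], ?_⟩
  set G : ℝ → ℝ := fun t =>
    (-2*(1-θ)*(θ+(1-θ)*Real.exp (-t/θ)) * ((Real.exp (t/θ) - 1 - t/θ)/(t/θ)^2)) /
      (θ * Real.exp (-t/θ) * ((1-θ)*((Real.exp (t/θ) - 1)/(t/θ)) + θ*Real.exp (t/θ))^2)
    with hGdef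
  have hmap : Filter.Tendsto (fun t : ℝ => t / θ) (nhdsWithin 0 (Set.Ioi 0))
      (nhdsWithin 0 (Set.Ioi 0)) := by
    rw [tendsto_nhdsWithin_iff]
    constructor
    · have := (tendsto_id : Filter.Tendsto id (nhds (0:ℝ)) (nhds 0)).div_const θ
      simpa using this.mono_left nhdsWithin_le_nhds
    · filter_upwards [self_mem_nhdsWithin] with t ht
      exact div_pos ht hθ0
  have hAlim : Filter.Tendsto (fun t : ℝ => (Real.exp (t/θ) - 1 - t/θ)/(t/θ)^2)
      (nhdsWithin 0 (Set.Ioi 0)) (nhds (1/2 : ℝ)) := limA.comp hmap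
  have hBlim : Filter.Tendsto (fun t : ℝ => (Real.exp (t/θ) - 1)/(t/θ))
      (nhdsWithin 0 (Set.Ioi 0)) (nhds 1) := limB.comp hmap
  have hexpm : Filter.Tendsto (fun t : ℝ => Real.exp (-t / θ))
      (nhdsWithin 0 (Set.Ioi 0)) (nhds 1) := by
    have : Filter.Tendsto (fun t : ℝ => Real.exp (-t / θ)) (nhds 0)
        (nhds (Real.exp (-0 / θ))) :=
      (Real.continuous_exp.comp (continuous_neg.div_const θ)).continuousAt
    simpa using this.mono_left nhdsWithin_le_nhds
  have hexpp : Filter.Tendsto (fun t : ℝ => Real.exp (t / θ))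
      (nhdsWithin 0 (Set.Ioi 0)) (nhds 1) := by
    have : Filter.Tendsto (fun t : ℝ => Real.exp (t / θ)) (nhds 0)
        (nhds (Real.exp (0 / θ))) :=
      (Real.continuous_exp.comp (continuous_id.div_const θ)).continuousAt
    simpa using this.mono_left nhdsWithin_le_nhds
  have hnum : Filter.Tendsto
      (fun t : ℝ => -2*(1-θ)*(θ+(1-θ)*Real.exp (-t/θ)) * ((Real.exp (t/θ) - 1 - t/θ)/(t/θ)^2))
      (nhdsWithin 0 (Set.Ioi 0)) (nhds (-2*(1-θ)*(θ+(1-θ)*1) * (1/2))) :=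
    (tendsto_const_nhds.mul (tendsto_const_nhds.add (tendsto_const_nhds.mul hexpm))).mul hAlim
  have hden : Filter.Tendsto
      (fun t : ℝ => θ * Real.exp (-t/θ) * ((1-θ)*((Real.exp (t/θ) - 1)/(t/θ)) + θ*Real.exp (t/θ))^2)
      (nhdsWithin 0 (Set.Ioi 0)) (nhds (θ * 1 * ((1-θ)*1 + θ*1)^2)) :=
    (tendsto_const_nhds.mul hexpm).mul
      (((tendsto_const_nhds.mul hBlim).add (tendsto_const_nhds.mul hexpp)).pow 2)
  have hGlim : Filter.Tendsto G (nhdsWithin 0 (Set.Ioi 0)) (nhds ((θ - 1) / θ)) := by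
    have hd : θ * 1 * ((1-θ)*1 + θ*1)^2 ≠ 0 := by
      have h1 : (1-θ)*1 + θ*1 = 1 := by ring
      rw [h1]
      simp [ne_of_gt hθ0]
    have h := hnum.div hden hd
    have heq : (-2*(1-θ)*(θ+(1-θ)*1) * (1/2)) / (θ * 1 * ((1-θ)*1 + θ*1)^2) = (θ - 1) / θ := by
      have h1 : (1-θ)*1 + θ*1 = 1 := by ring
      rw [h1]
      field_simp
      ring
    rw [heq] at h
    exact h
  refine hGlim.congr' ?_
  filter_upwards [self_mem_nhdsWithin] with t ht
  have ht0 : (0:ℝ) < t := ht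
  have hx0 : t / θ ≠ 0 := ne_of_gt (div_pos ht0 hθ0)
  have hu0 : Real.exp (-t/θ) ≠ 0 := (Real.exp_pos _).ne'
  have hu1 : Real.exp (-t/θ) < 1 := by
    rw [← Real.exp_zero]
    exact Real.exp_lt_exp.mpr (div_neg_of_neg_of_pos (by linarith) hθ0)
  have hD : θ + (1-θ)*Real.exp (-t/θ) ≠ 0 := by
    have : 0 < (1-θ)*Real.exp (-t/θ) := mul_pos (by linarith) (Real.exp_pos _)
    positivity
  have hN : (1-θ)*(1-Real.exp (-t/θ)) + θ*(t/θ) ≠ 0 := by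
    have h1 : 0 ≤ (1-θ)*(1-Real.exp (-t/θ)) :=
      mul_nonneg (by linarith) (by linarith)
    have h2 : θ*(t/θ) = t := by field_simp
    rw [h2]
    linarith
  have hinv : (Real.exp (-t/θ))⁻¹ = Real.exp (t/θ) := by
    rw [← Real.exp_neg]
    ring_nf
  have hkey := key θ ω (t/θ) (Real.exp (-t/θ)) (ne_of_gt hθ0) hu0 hx0 hD hN (ne_of_gt hω)
  rw [hinv] at hkey
  have htt : θ + θ*(t/θ) = θ + t := by field_simp
  have htt2 : (1-θ)*(1-Real.exp (-t/θ)) + θ*(t/θ) = (1-θ)*(1-Real.exp (-t/θ)) + t := by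
    field_simp
  rw [htt, htt2] at hkey
  show G t = η t / ξ₁ t
  rw [hGdef]
  simp only [η, ξ₁]
  exact hkey
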